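/- Tightness of the SDP relaxation for two groups: let k = 2 with group matrices A ∈ ℝ^{a×n} and B ∈ ℝ^{b×n}, and assume that for every μ ∈ [0,1] the largest eigenvalue of C(μ) = μ AᵀA + (1−μ) BᵀB is simple. Then the SDP value p_SDP = inf over real symmetric positive semidefinite X with Tr(X) ≤ 1 of max(s_1 − Tr(AᵀA X), s_2 − Tr(BᵀB X)) equals min over unit vectors v of max(h_A(v), h_B(v)); in particular, the SDP optimum is attained at a rank-one matrix X = v vᵀ for some unit vector v. -/

import Mathlib

open Matrix

/-- The largest eigenvalue of a real symmetric matrix, via its Rayleigh-quotient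
characterization: `λmax(M) = sup { vᵀ M v : ‖v‖ = 1 }`. -/
noncomputable def lamMax {n : ℕ} (M : Matrix (Fin n) (Fin n) ℝ) : ℝ :=
  sSup {r : ℝ | ∃ v : Fin n → ℝ, v ⬝ᵥ v = 1 ∧ r = v ⬝ᵥ (M *ᵥ v)}

/-- The rank-1 fair loss `h_M(v) = λmax(MᵀM) − vᵀ(MᵀM)v`. -/
noncomputable def fairLoss {m n : ℕ} (M : Matrix (Fin m) (Fin n) ℝ) (v : Fin n → ℝ) : ℝ :=
  lamMax (Mᵀ * M) - v ⬝ᵥ ((Mᵀ * M) *ᵥ v)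

/-- `C(μ) = μ AᵀA + (1−μ) BᵀB`. -/
noncomputable def Cmat {a b n : ℕ} (A : Matrix (Fin a) (Fin n) ℝ)
    (B : Matrix (Fin b) (Fin n) ℝ) (t : ℝ) : Matrix (Fin n) (Fin n) ℝ :=
  t • (Aᵀ * A) + (1 - t) • (Bᵀ * B)

/-- The SDP objective for two groups: `X ↦ max(s₁ − Tr(AᵀA X), s₂ − Tr(BᵀB X))`. -/
noncomputable def sdpObj {a b n : ℕ} (A : Matrix (Fin a) (Fin n) ℝ)
    (B : Matrix (Fin b) (Fin n) ℝ) (X : Matrix (Fin n) (Fin n) ℝ) : ℝ :=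
  max (lamMax (Aᵀ * A) - (Aᵀ * A * X).trace) (lamMax (Bᵀ * B) - (Bᵀ * B * X).trace)

set_option maxHeartbeats 1000000

namespace Stmt12Aux
variable {n : ℕ}

/-- quadratic form -/
noncomputable def qf (M : Matrix (Fin n) (Fin n) ℝ) (u : Fin n → ℝ) : ℝ := u ⬝ᵥ (M *ᵥ u)

lemma lamMax_eq_sSup (M : Matrix (Fin n) (Fin n) ℝ) :
    lamMax M = sSup {r : ℝ | ∃ v : Fin n → ℝ, v ⬝ᵥ v = 1 ∧ r = qf M v} := rfl

lemma dp_self_nonneg (u : Fin n → ℝ) : 0 ≤ u ⬝ᵥ u :=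
  Finset.sum_nonneg fun j _ => mul_self_nonneg (u j)

lemma dp_self_eq_zero {u : Fin n → ℝ} (h : u ⬝ᵥ u = 0) : u = 0 := by
  ext i
  have := Finset.sum_eq_zero_iff_of_nonneg (fun j _ => mul_self_nonneg (u j))
    |>.mp h i (Finset.mem_univ i)
  have : u i = 0 := by nlinarith
  simpa using this

lemma qf_smul (M : Matrix (Fin n) (Fin n) ℝ) (c : ℝ) (u : Fin n → ℝ) :
    qf M (c • u) = c ^ 2 * qf M u := by
  unfold qf
  rw [mulVec_smul, smul_dotProduct, dotProduct_smul]
  simp [smul_eq_mul]; ring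

lemma qf_continuous (M : Matrix (Fin n) (Fin n) ℝ) : Continuous (qf M) := by
  unfold qf dotProduct mulVec
  exact continuous_finset_sum _ fun i _ => (continuous_apply i).mul
    (continuous_finset_sum _ fun j _ => continuous_const.mul (continuous_apply j))

def sph (n : ℕ) : Set (Fin n → ℝ) := {u | u ⬝ᵥ u = 1}

lemma sph_compact : IsCompact (sph n) := by
  have hcont : Continuous fun u : Fin n → ℝ => u ⬝ᵥ u := by
    unfold dotProduct
    exact continuous_finset_sum _ fun i _ => (continuous_apply i).mul (continuous_apply i)
  have hc : IsClosed (sph n) := IsClosed.preimage hcont (isClosed_singleton (x := (1:ℝ)))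
  refine (isCompact_closedBall (0 : Fin n → ℝ) 1).of_isClosed_subset hc ?_
  intro u hu
  simp only [Metric.mem_closedBall, dist_zero_right]
  rw [pi_norm_le_iff_of_nonneg zero_le_one]
  intro i
  have h1 : u i * u i ≤ 1 := by
    have := Finset.single_le_sum (f := fun j => u j * u j)
      (fun j _ => mul_self_nonneg (u j)) (Finset.mem_univ i)
    exact this.trans_eq hu
  rw [Real.norm_eq_abs, abs_le]
  constructor <;> nlinarith

lemma sph_nonempty (hn : 0 < n) : (sph n).Nonempty := by
  refine ⟨Pi.single ⟨0, hn⟩ 1, ?_⟩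
  simp [sph, dotProduct_single]

lemma lamMax_isGreatest (hn : 0 < n) (M : Matrix (Fin n) (Fin n) ℝ) :
    ∃ v : Fin n → ℝ, v ⬝ᵥ v = 1 ∧ qf M v = lamMax M ∧
      ∀ u : Fin n → ℝ, u ⬝ᵥ u = 1 → qf M u ≤ lamMax M := by
  obtain ⟨v, hv, hmax⟩ := sph_compact.exists_isMaxOn (sph_nonempty hn)
    ((qf_continuous M).continuousOn)
  have hgreat : IsGreatest {r : ℝ | ∃ u : Fin n → ℝ, u ⬝ᵥ u = 1 ∧ r = qf M u} (qf M v) := by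
    constructor
    · exact ⟨v, hv, rfl⟩
    · rintro r ⟨u, hu, rfl⟩; exact hmax hu
  have h2 : lamMax M = qf M v := by rw [lamMax_eq_sSup]; exact hgreat.csSup_eq
  exact ⟨v, hv, h2.symm, fun u hu => h2 ▸ hgreat.2 ⟨u, hu, rfl⟩⟩

lemma qf_le_lamMax (hn : 0 < n) (M : Matrix (Fin n) (Fin n) ℝ) (u : Fin n → ℝ) :
    qf M u ≤ lamMax M * (u ⬝ᵥ u) := by
  obtain ⟨v, hv, hq, hb⟩ := lamMax_isGreatest hn M
  rcases eq_or_ne u 0 with rfl | hu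
  · simp [qf]
  · have hpos : 0 < u ⬝ᵥ u :=
      (dp_self_nonneg u).lt_of_ne fun h => hu (dp_self_eq_zero h.symm)
    set c : ℝ := (Real.sqrt (u ⬝ᵥ u))⁻¹ with hc
    have hsq : Real.sqrt (u ⬝ᵥ u) ^ 2 = u ⬝ᵥ u := Real.sq_sqrt hpos.le
    have hcpos : 0 < Real.sqrt (u ⬝ᵥ u) := Real.sqrt_pos.mpr hpos
    have hc2 : c ^ 2 = (u ⬝ᵥ u)⁻¹ := by rw [hc, inv_pow, hsq]
    have hunit : (c • u) ⬝ᵥ (c • u) = 1 := by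
      rw [smul_dotProduct, dotProduct_smul, smul_eq_mul, smul_eq_mul, ← mul_assoc, ← pow_two,
        hc2]
      field_simp
    have hle := hb (c • u) hunit
    rw [qf_smul, hc2] at hle
    calc qf M u = (u ⬝ᵥ u) * ((u ⬝ᵥ u)⁻¹ * qf M u) := by field_simp
    _ ≤ (u ⬝ᵥ u) * lamMax M := mul_le_mul_of_nonneg_left hle hpos.le
    _ = lamMax M * (u ⬝ᵥ u) := mul_comm _ _

lemma symm_dp {M : Matrix (Fin n) (Fin n) ℝ} (hMt : Mᵀ = M) (x y : Fin n → ℝ) :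
    x ⬝ᵥ (M *ᵥ y) = y ⬝ᵥ (M *ᵥ x) := by
  rw [dotProduct_mulVec, ← hMt, vecMul_transpose, dotProduct_comm, hMt]

lemma zero_of_forall (a cc : ℝ) (hcc : 0 ≤ cc) (h : ∀ t : ℝ, 0 ≤ 2 * t * a + t ^ 2 * cc) :
    a = 0 := by
  have hpos : (0:ℝ) < cc + 1 := by linarith
  have h1 := h (-a * (cc + 1)⁻¹)
  have hkey : (cc + 1)⁻¹ * (cc + 1)⁻¹ * cc ≤ (cc + 1)⁻¹ := by
    rw [mul_assoc]
    have : (cc + 1)⁻¹ * cc ≤ 1 := by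
      rw [inv_mul_le_iff₀ hpos]; linarith
    nlinarith [inv_pos.mpr hpos]
  have h3 : a ^ 2 ≤ 0 := by
    nlinarith [mul_le_mul_of_nonneg_left hkey (sq_nonneg a), h1, inv_pos.mpr hpos, sq_nonneg a,
      mul_pos (inv_pos.mpr hpos) (inv_pos.mpr hpos)]
  exact sq_eq_zero_iff.mp (le_antisymm h3 (sq_nonneg a))

lemma maxOn_eigen (hn : 0 < n) (M : Matrix (Fin n) (Fin n) ℝ) (hMt : Mᵀ = M)
    (v : Fin n → ℝ) (hv : v ⬝ᵥ v = 1) (hvmax : qf M v = lamMax M) :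
    M *ᵥ v = lamMax M • v := by
  set l := lamMax M with hl
  have key : ∀ u : Fin n → ℝ, l * (u ⬝ᵥ v) - u ⬝ᵥ (M *ᵥ v) = 0 := by
    intro u
    apply zero_of_forall _ (l * (u ⬝ᵥ u) - qf M u) (by linarith [qf_le_lamMax hn M u])
    intro t
    have hexp := qf_le_lamMax hn M (v + t • u)
    have hsymm := symm_dp hMt v u
    have e1 : qf M (v + t • u)
        = qf M v + 2 * t * (u ⬝ᵥ (M *ᵥ v)) + t ^ 2 * qf M u := by
      unfold qf
      simp only [mulVec_add, mulVec_smul, dotProduct_add, add_dotProduct, dotProduct_smul,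
        smul_dotProduct, smul_eq_mul]
      rw [hsymm]
      ring
    have e2 : (v + t • u) ⬝ᵥ (v + t • u) = 1 + 2 * t * (u ⬝ᵥ v) + t ^ 2 * (u ⬝ᵥ u) := by
      simp only [dotProduct_add, add_dotProduct, dotProduct_smul, smul_dotProduct,
        smul_eq_mul, hv]
      rw [dotProduct_comm u v]
      ring
    rw [e1, e2] at hexp
    have hqv : qf M v = l := hvmax
    nlinarith [hexp]
  ext i
  have := key (Pi.single i 1)
  rw [single_dotProduct, single_dotProduct] at this
  simp only [one_mul] at this
  simp only [Pi.smul_apply, smul_eq_mul]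
  linarith

lemma trace_mul_vecMulVec (M : Matrix (Fin n) (Fin n) ℝ) (v : Fin n → ℝ) :
    (M * vecMulVec v v).trace = qf M v := by
  unfold qf dotProduct mulVec vecMulVec
  simp [Matrix.trace, Matrix.diag, Matrix.mul_apply, Finset.mul_sum, dotProduct]
  apply Finset.sum_congr rfl; intro i _
  apply Finset.sum_congr rfl; intro j _
  ring

lemma trace_vecMulVec (v : Fin n → ℝ) : (vecMulVec v v).trace = v ⬝ᵥ v := by
  simp [Matrix.trace, Matrix.diag, vecMulVec, dotProduct]

lemma posSemidef_vecMulVec (v : Fin n → ℝ) : (vecMulVec v v).PosSemidef := by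
  rw [posSemidef_iff_dotProduct_mulVec]
  constructor
  · ext i j; simp [vecMulVec, conjTranspose, mul_comm]
  · intro x
    have hmv : vecMulVec v v *ᵥ x = (v ⬝ᵥ x) • v := by
      ext i; simp [vecMulVec, mulVec, dotProduct, Finset.mul_sum, mul_comm, mul_left_comm, mul_assoc]
    rw [hmv]
    simp only [star_trivial, dotProduct_smul, smul_eq_mul]
    have : x ⬝ᵥ v = v ⬝ᵥ x := dotProduct_comm _ _
    rw [this]
    exact mul_self_nonneg _

lemma psd_trace_nonneg (X : Matrix (Fin n) (Fin n) ℝ) (hX : X.PosSemidef) : 0 ≤ X.trace := by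
  apply Finset.sum_nonneg
  intro i _
  have := hX.dotProduct_mulVec_nonneg (Pi.single i 1)
  simpa [mulVec_single, single_dotProduct] using this

/-- Tr(M X) ≤ λmax(M) · Tr(X) for PSD X. -/
lemma trace_mul_le (hn : 0 < n) (M : Matrix (Fin n) (Fin n) ℝ)
    (X : Matrix (Fin n) (Fin n) ℝ) (hX : X.PosSemidef) :
    (M * X).trace ≤ lamMax M * X.trace := by
  obtain ⟨Y, hY⟩ : ∃ Y : Matrix (Fin n) (Fin n) ℝ, X = Yᴴ * Y := by
    open scoped MatrixOrder Matrix.Norms.L2Operator in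
    exact CStarAlgebra.nonneg_iff_eq_star_mul_self.mp hX.nonneg
  have hY' : X = Yᵀ * Y := by simpa using hY
  have h1 : (M * X).trace = ∑ i, qf M (fun j => Y i j) := by
    rw [hY', show M * (Yᵀ * Y) = (M * Yᵀ) * Y by rw [Matrix.mul_assoc],
      trace_mul_comm]
    unfold qf mulVec dotProduct
    simp [Matrix.trace, Matrix.diag, Matrix.mul_apply, Finset.mul_sum]
  have h2 : X.trace = ∑ i, (fun j => Y i j) ⬝ᵥ (fun j => Y i j) := by
    rw [hY']
    unfold dotProduct
    simp [Matrix.trace, Matrix.diag, Matrix.mul_apply]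
    rw [Finset.sum_comm]
  rw [h1, h2, Finset.mul_sum]
  exact Finset.sum_le_sum fun i _ => qf_le_lamMax hn M _

lemma qf_comb (P Q : Matrix (Fin n) (Fin n) ℝ) (t : ℝ) (u : Fin n → ℝ) :
    qf (t • P + (1 - t) • Q) u = t * qf P u + (1 - t) * qf Q u := by
  unfold qf
  rw [add_mulVec, smul_mulVec, smul_mulVec, dotProduct_add,
    dotProduct_smul, dotProduct_smul, smul_eq_mul, smul_eq_mul]

lemma key (hn : 0 < n) (P Q : Matrix (Fin n) (Fin n) ℝ)
    (hPt : Pᵀ = P) (hQt : Qᵀ = Q)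
    (hP0 : ∀ u, 0 ≤ qf P u) (hQ0 : ∀ u, 0 ≤ qf Q u)
    (hsimple : ∀ μ ∈ Set.Icc (0:ℝ) 1, ∃ w : Fin n → ℝ, w ≠ 0 ∧
      (μ • P + (1 - μ) • Q) *ᵥ w = lamMax (μ • P + (1 - μ) • Q) • w ∧
      ∀ u : Fin n → ℝ, (μ • P + (1 - μ) • Q) *ᵥ u = lamMax (μ • P + (1 - μ) • Q) • u →
        ∃ c : ℝ, u = c • w)
    (μs : ℝ) (hμ0 : 0 ≤ μs) (hμ1 : μs < 1)
    (hmax : ∀ t ∈ Set.Icc (0:ℝ) 1,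
      t * lamMax P + (1 - t) * lamMax Q - lamMax (t • P + (1 - t) • Q) ≤
      μs * lamMax P + (1 - μs) * lamMax Q - lamMax (μs • P + (1 - μs) • Q))
    (v : Fin n → ℝ) (hv : v ⬝ᵥ v = 1)
    (hve : (μs • P + (1 - μs) • Q) *ᵥ v = lamMax (μs • P + (1 - μs) • Q) • v) :
    lamMax P - qf P v ≤ lamMax Q - qf Q v := by
  by_contra hcon
  push_neg at hcon
  set s1 := lamMax P with hs1
  set s2 := lamMax Q with hs2
  set C : ℝ → Matrix (Fin n) (Fin n) ℝ := fun t => t • P + (1 - t) • Q with hC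
  set f : ℝ → ℝ := fun t => lamMax (C t) with hf
  have hs1nn : 0 ≤ s1 := by
    obtain ⟨e, he, hq, _⟩ := lamMax_isGreatest hn P
    calc (0:ℝ) ≤ qf P e := hP0 e
    _ = s1 := hq
  have hs2nn : 0 ≤ s2 := by
    obtain ⟨e, he, hq, _⟩ := lamMax_isGreatest hn Q
    calc (0:ℝ) ≤ qf Q e := hQ0 e
    _ = s2 := hq
  have hqP_le : ∀ u : Fin n → ℝ, u ⬝ᵥ u = 1 → qf P u ≤ s1 := fun u hu => by
    have := qf_le_lamMax hn P u; rw [hu, mul_one] at this; exact this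
  have hqQ_le : ∀ u : Fin n → ℝ, u ⬝ᵥ u = 1 → qf Q u ≤ s2 := fun u hu => by
    have := qf_le_lamMax hn Q u; rw [hu, mul_one] at this; exact this
  have hslope_v : qf P v - qf Q v < s1 - s2 := by linarith
  set μk : ℕ → ℝ := fun k => μs + (1 - μs) / (k + 1 : ℕ) with hμk
  have hμk_mem : ∀ k, μk k ∈ Set.Icc (0:ℝ) 1 := by
    intro k
    have hk1 : (1:ℝ) ≤ (k + 1 : ℕ) := by exact_mod_cast Nat.succ_le_succ (Nat.zero_le k)
    have hk0 : (0:ℝ) < (k + 1 : ℕ) := by linarith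
    have h1 : (0:ℝ) < (1 - μs) / (k + 1 : ℕ) := div_pos (by linarith) hk0
    have h2 : (1 - μs) / (k + 1 : ℕ) ≤ 1 - μs := by
      rw [div_le_iff₀ hk0]
      nlinarith
    constructor
    · simp only [hμk]; linarith
    · simp only [hμk]; linarith
  have hμk_gt : ∀ k, μs < μk k := by
    intro k
    have hk1 : (0:ℝ) < (k + 1 : ℕ) := by positivity
    have : (0:ℝ) < (1 - μs) / (k + 1 : ℕ) := div_pos (by linarith) hk1
    simp only [hμk]; linarith
  have hμk_tendsto : Filter.Tendsto μk Filter.atTop (nhds μs) := by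
    have heq : μk = fun k : ℕ => μs + (1 - μs) * (1 / ((k:ℝ) + 1)) := by
      funext k
      simp only [hμk]
      push_cast
      ring
    rw [heq]
    simpa using
      (tendsto_one_div_add_atTop_nhds_zero_nat.const_mul (1 - μs)).const_add μs
  have hchoice : ∀ k : ℕ, ∃ u : Fin n → ℝ, u ⬝ᵥ u = 1 ∧ qf (C (μk k)) u = f (μk k) :=
    fun k => by
      obtain ⟨u, hu, hq, _⟩ := lamMax_isGreatest hn (C (μk k))
      exact ⟨u, hu, hq⟩
  choose u hu_unit hu_qf using hchoice
  have hμs_mem : μs ∈ Set.Icc (0:ℝ) 1 := ⟨hμ0, hμ1.le⟩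
  have hqfC : ∀ (t : ℝ) (x : Fin n → ℝ),
      qf (C t) x = qf (C μs) x + (t - μs) * (qf P x - qf Q x) := by
    intro t x
    rw [hC]
    simp only []
    rw [qf_comb, qf_comb]
    ring
  have hfk_lb : ∀ k, f μs + (μk k - μs) * (s1 - s2) ≤ f (μk k) := by
    intro k
    have := hmax (μk k) (hμk_mem k)
    simp only [hf, hC] at this ⊢
    nlinarith [this]
  have ha_ub : ∀ k, qf (C μs) (u k) ≤ f μs := by
    intro k
    have := qf_le_lamMax hn (C μs) (u k)
    rw [hu_unit k, mul_one] at this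
    exact this
  have hσ_bound : ∀ k, |qf P (u k) - qf Q (u k)| ≤ s1 + s2 := by
    intro k
    have h1 := hqP_le (u k) (hu_unit k)
    have h2 := hqQ_le (u k) (hu_unit k)
    have h3 := hP0 (u k)
    have h4 := hQ0 (u k)
    rw [abs_le]; constructor <;> linarith
  have ha_lb : ∀ k, f μs - (μk k - μs) * (|s1 - s2| + (s1 + s2)) ≤ qf (C μs) (u k) := by
    intro k
    have hid := hqfC (μk k) (u k)
    have hfk := hu_qf k
    have hlb := hfk_lb k
    have hσ := hσ_bound k
    have hd : 0 < μk k - μs := by linarith [hμk_gt k]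
    have hσ' : qf P (u k) - qf Q (u k) ≤ s1 + s2 := (abs_le.mp hσ).2
    have hm1 := mul_le_mul_of_nonneg_left hσ' hd.le
    have hm2 := mul_le_mul_of_nonneg_left (neg_abs_le (s1 - s2)) hd.le
    linarith [hm1, hm2, hlb, hid, hfk]
  have ha_tendsto : Filter.Tendsto (fun k => qf (C μs) (u k)) Filter.atTop (nhds (f μs)) := by
    have hlow : Filter.Tendsto (fun k => f μs - (μk k - μs) * (|s1 - s2| + (s1 + s2)))
        Filter.atTop (nhds (f μs)) := by
      have h1 : Filter.Tendsto (fun k => μk k - μs) Filter.atTop (nhds 0) := by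
        simpa using hμk_tendsto.sub_const μs
      have h2 := (h1.mul_const (|s1 - s2| + (s1 + s2))).const_sub (f μs)
      simpa using h2
    exact tendsto_of_tendsto_of_tendsto_of_le_of_le hlow tendsto_const_nhds
      (fun k => ha_lb k) (fun k => ha_ub k)
  have hu_mem : ∀ k, u k ∈ sph n := fun k => hu_unit k
  obtain ⟨ui, hui_mem, φ, hφ, hφ_tendsto⟩ := sph_compact.tendsto_subseq hu_mem
  have hui_unit : ui ⬝ᵥ ui = 1 := hui_mem
  have hqf_ui : qf (C μs) ui = f μs := by
    have h1 : Filter.Tendsto (fun k => qf (C μs) (u (φ k))) Filter.atTop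
        (nhds (qf (C μs) ui)) := ((qf_continuous (C μs)).tendsto ui).comp hφ_tendsto
    have h2 : Filter.Tendsto (fun k => qf (C μs) (u (φ k))) Filter.atTop (nhds (f μs)) :=
      ha_tendsto.comp hφ.tendsto_atTop
    exact tendsto_nhds_unique h1 h2
  have hCt : (C μs)ᵀ = C μs := by
    rw [hC]; simp only [transpose_add, transpose_smul, hPt, hQt]
  have hui_eigen : C μs *ᵥ ui = lamMax (C μs) • ui :=
    maxOn_eigen hn (C μs) hCt ui hui_unit hqf_ui
  obtain ⟨w, hw0, hwe, hwuniq⟩ := hsimple μs hμs_mem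
  obtain ⟨c, hc⟩ := hwuniq ui hui_eigen
  obtain ⟨c', hc'⟩ := hwuniq v hve
  have hww : 0 < w ⬝ᵥ w := (dp_self_nonneg w).lt_of_ne fun h => hw0 (dp_self_eq_zero h.symm)
  have hc2 : c ^ 2 * (w ⬝ᵥ w) = 1 := by
    have := hui_unit
    rw [hc, smul_dotProduct, dotProduct_smul, smul_eq_mul, smul_eq_mul] at this
    nlinarith [this]
  have hc'2 : c' ^ 2 * (w ⬝ᵥ w) = 1 := by
    have := hv
    rw [hc', smul_dotProduct, dotProduct_smul, smul_eq_mul, smul_eq_mul] at this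
    nlinarith [this]
  have hcc' : c ^ 2 = c' ^ 2 := by
    have h1 : c ^ 2 = (w ⬝ᵥ w)⁻¹ := by field_simp at hc2 ⊢; linarith [hc2]
    have h2 : c' ^ 2 = (w ⬝ᵥ w)⁻¹ := by field_simp at hc'2 ⊢; linarith [hc'2]
    rw [h1, h2]
  have hslope_eq : qf P ui - qf Q ui = qf P v - qf Q v := by
    rw [hc, hc', qf_smul, qf_smul, qf_smul, qf_smul, hcc']
  have hσ_tendsto : Filter.Tendsto (fun k => qf P (u (φ k)) - qf Q (u (φ k)))
      Filter.atTop (nhds (qf P v - qf Q v)) := by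
    rw [← hslope_eq]
    exact (((qf_continuous P).tendsto ui).comp hφ_tendsto).sub
      (((qf_continuous Q).tendsto ui).comp hφ_tendsto)
  have hev : ∀ᶠ k in Filter.atTop, qf P (u (φ k)) - qf Q (u (φ k)) < s1 - s2 :=
    hσ_tendsto.eventually_lt_const hslope_v
  obtain ⟨K, hK⟩ := hev.exists
  set j := φ K
  have hd : 0 < μk j - μs := by linarith [hμk_gt j]
  have h1 : f (μk j) = qf (C μs) (u j) + (μk j - μs) * (qf P (u j) - qf Q (u j)) := by
    rw [← hu_qf j, hqfC]
  have h2 : f (μk j) < f μs + (μk j - μs) * (s1 - s2) := by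
    rw [h1]
    have := ha_ub j
    nlinarith [hK]
  linarith [hfk_lb j, h2]

lemma lamMax_comb_continuous (hn : 0 < n) (P Q : Matrix (Fin n) (Fin n) ℝ)
    (hP0 : ∀ u, 0 ≤ qf P u) (hQ0 : ∀ u, 0 ≤ qf Q u) :
    Continuous fun t : ℝ => lamMax (t • P + (1 - t) • Q) := by
  set s1 := lamMax P with hs1
  set s2 := lamMax Q with hs2
  have hs1nn : 0 ≤ s1 := by
    obtain ⟨e, he, hq, _⟩ := lamMax_isGreatest hn P
    calc (0:ℝ) ≤ qf P e := hP0 e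
    _ = s1 := hq
  have hs2nn : 0 ≤ s2 := by
    obtain ⟨e, he, hq, _⟩ := lamMax_isGreatest hn Q
    calc (0:ℝ) ≤ qf Q e := hQ0 e
    _ = s2 := hq
  have hone : ∀ s t : ℝ, lamMax (s • P + (1 - s) • Q) ≤
      lamMax (t • P + (1 - t) • Q) + |s - t| * (s1 + s2) := by
    intro s t
    obtain ⟨e, he, hq, _⟩ := lamMax_isGreatest hn (s • P + (1 - s) • Q)
    have h1 : qf (s • P + (1 - s) • Q) e = qf (t • P + (1 - t) • Q) e
        + (s - t) * (qf P e - qf Q e) := by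
      rw [qf_comb, qf_comb]; ring
    have h2 : qf (t • P + (1 - t) • Q) e ≤ lamMax (t • P + (1 - t) • Q) := by
      have := qf_le_lamMax hn (t • P + (1 - t) • Q) e
      rw [he, mul_one] at this; exact this
    have h3 : |qf P e - qf Q e| ≤ s1 + s2 := by
      have hP1 := qf_le_lamMax hn P e
      have hQ1 := qf_le_lamMax hn Q e
      rw [he, mul_one] at hP1 hQ1
      have h4 := hP0 e
      have h5 := hQ0 e
      rw [abs_le]; constructor <;> linarith
    have h6 : (s - t) * (qf P e - qf Q e) ≤ |s - t| * (s1 + s2) := by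
      calc (s - t) * (qf P e - qf Q e) ≤ |(s - t) * (qf P e - qf Q e)| := le_abs_self _
      _ = |s - t| * |qf P e - qf Q e| := abs_mul _ _
      _ ≤ |s - t| * (s1 + s2) := mul_le_mul_of_nonneg_left h3 (abs_nonneg _)
    linarith [hq.symm.le.trans_eq h1]
  have hlip : LipschitzWith (Real.toNNReal (s1 + s2))
      (fun t : ℝ => lamMax (t • P + (1 - t) • Q)) := by
    apply LipschitzWith.of_dist_le_mul
    intro s t
    rw [Real.dist_eq, Real.dist_eq, Real.coe_toNNReal _ (by linarith)]
    rw [abs_sub_le_iff]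
    constructor
    · have := hone s t
      have habs : |s - t| = |s - t| := rfl
      nlinarith [this, abs_nonneg (s - t)]
    · have := hone t s
      have h7 : |t - s| = |s - t| := abs_sub_comm t s
      rw [h7] at this
      nlinarith [this]
  exact hlip.continuous

end Stmt12Aux

open Stmt12Aux in
/-- tightness of the SDP relaxation for two groups: assuming the
largest eigenvalue of `C(μ)` is simple for every `μ ∈ [0,1]`, the SDP value over
PSD matrices `X` with `Tr(X) ≤ 1` equals the minimum over unit vectors `v` of
`max(h_A(v), h_B(v))`, and the SDP optimum is attained at the rank-one matrix
`X = v vᵀ` for a unit vector `v` minimizing the primal. -/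
theorem stmt12 {a b n : ℕ} (A : Matrix (Fin a) (Fin n) ℝ) (B : Matrix (Fin b) (Fin n) ℝ)
    (hsimple : ∀ μ ∈ Set.Icc (0 : ℝ) 1, ∃ w : Fin n → ℝ, w ≠ 0 ∧
      Cmat A B μ *ᵥ w = lamMax (Cmat A B μ) • w ∧
      ∀ u : Fin n → ℝ, Cmat A B μ *ᵥ u = lamMax (Cmat A B μ) • u → ∃ c : ℝ, u = c • w) :
    ∃ v : Fin n → ℝ, v ⬝ᵥ v = 1 ∧
      (∀ u : Fin n → ℝ, u ⬝ᵥ u = 1 →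
        max (fairLoss A v) (fairLoss B v) ≤ max (fairLoss A u) (fairLoss B u)) ∧
      IsLeast {r : ℝ | ∃ X : Matrix (Fin n) (Fin n) ℝ, X.PosSemidef ∧ X.trace ≤ 1 ∧
          r = sdpObj A B X}
        (sdpObj A B (Matrix.vecMulVec v v)) ∧
      sdpObj A B (Matrix.vecMulVec v v) = max (fairLoss A v) (fairLoss B v) := by
  classical
  -- n > 0
  have hn : 0 < n := by
    rcases Nat.eq_zero_or_pos n with h0 | h
    · exfalso
      subst h0
      obtain ⟨w, hw0, -, -⟩ := hsimple 0 ⟨le_refl _, zero_le_one⟩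
      exact hw0 (Subsingleton.elim _ _)
    · exact h
  set P : Matrix (Fin n) (Fin n) ℝ := Aᵀ * A with hP
  set Q : Matrix (Fin n) (Fin n) ℝ := Bᵀ * B with hQ
  have hPt : Pᵀ = P := by rw [hP, transpose_mul, transpose_transpose]
  have hQt : Qᵀ = Q := by rw [hQ, transpose_mul, transpose_transpose]
  have hP0 : ∀ u : Fin n → ℝ, 0 ≤ qf P u := by
    intro u
    have h : qf P u = (A *ᵥ u) ⬝ᵥ (A *ᵥ u) := by
      unfold qf
      rw [hP, ← mulVec_mulVec, dotProduct_mulVec, vecMul_transpose]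
    rw [h]; exact dp_self_nonneg _
  have hQ0 : ∀ u : Fin n → ℝ, 0 ≤ qf Q u := by
    intro u
    have h : qf Q u = (B *ᵥ u) ⬝ᵥ (B *ᵥ u) := by
      unfold qf
      rw [hQ, ← mulVec_mulVec, dotProduct_mulVec, vecMul_transpose]
    rw [h]; exact dp_self_nonneg _
  have hCmat : ∀ t : ℝ, Cmat A B t = t • P + (1 - t) • Q := fun t => rfl
  have hsimple' : ∀ μ ∈ Set.Icc (0:ℝ) 1, ∃ w : Fin n → ℝ, w ≠ 0 ∧
      (μ • P + (1 - μ) • Q) *ᵥ w = lamMax (μ • P + (1 - μ) • Q) • w ∧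
      ∀ u : Fin n → ℝ, (μ • P + (1 - μ) • Q) *ᵥ u = lamMax (μ • P + (1 - μ) • Q) • u →
        ∃ c : ℝ, u = c • w := by
    intro μ hμ
    have := hsimple μ hμ
    rw [hCmat μ] at this
    exact this
  set s1 := lamMax P with hs1
  set s2 := lamMax Q with hs2
  -- maximizer of g on [0,1]
  have hgcont : Continuous fun t : ℝ =>
      t * s1 + (1 - t) * s2 - lamMax (t • P + (1 - t) • Q) := by
    apply Continuous.sub
    · exact (continuous_id.mul continuous_const).add
        ((continuous_const.sub continuous_id).mul continuous_const)
    · exact lamMax_comb_continuous hn P Q hP0 hQ0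
  obtain ⟨μs, hμs_mem, hμs_max⟩ := isCompact_Icc.exists_isMaxOn
    (⟨0, by norm_num⟩ : (Set.Icc (0:ℝ) 1).Nonempty) hgcont.continuousOn
  have hmax_raw : ∀ t ∈ Set.Icc (0:ℝ) 1,
      t * s1 + (1 - t) * s2 - lamMax (t • P + (1 - t) • Q) ≤
      μs * s1 + (1 - μs) * s2 - lamMax (μs • P + (1 - μs) • Q) := fun t ht => hμs_max ht
  -- eigenvector at μs
  obtain ⟨w, hw0, hwe, hwuniq⟩ := hsimple' μs hμs_mem
  have hww : 0 < w ⬝ᵥ w := (dp_self_nonneg w).lt_of_ne fun h => hw0 (dp_self_eq_zero h.symm)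
  set c : ℝ := (Real.sqrt (w ⬝ᵥ w))⁻¹ with hcdef
  set v : Fin n → ℝ := c • w with hvdef
  have hsq : Real.sqrt (w ⬝ᵥ w) ^ 2 = w ⬝ᵥ w := Real.sq_sqrt hww.le
  have hcpos : 0 < Real.sqrt (w ⬝ᵥ w) := Real.sqrt_pos.mpr hww
  have hc2 : c ^ 2 = (w ⬝ᵥ w)⁻¹ := by rw [hcdef, inv_pow, hsq]
  have hv : v ⬝ᵥ v = 1 := by
    rw [hvdef, smul_dotProduct, dotProduct_smul, smul_eq_mul, smul_eq_mul, ← mul_assoc,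
      ← pow_two, hc2]
    field_simp
  have hve : (μs • P + (1 - μs) • Q) *ᵥ v = lamMax (μs • P + (1 - μs) • Q) • v := by
    rw [hvdef, mulVec_smul, hwe, smul_comm]
  -- the two key inequalities
  have hkey1 : μs < 1 → s1 - qf P v ≤ s2 - qf Q v := fun h =>
    key hn P Q hPt hQt hP0 hQ0 hsimple' μs hμs_mem.1 h hmax_raw v hv hve
  have hkey2 : 0 < μs → s2 - qf Q v ≤ s1 - qf P v := by
    intro h
    have hswap : ∀ t : ℝ, t • Q + (1 - t) • P = (1 - t) • P + (1 - (1 - t)) • Q := by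
      intro t
      rw [sub_sub_cancel, add_comm]
    have hsimple_sw : ∀ μ ∈ Set.Icc (0:ℝ) 1, ∃ w : Fin n → ℝ, w ≠ 0 ∧
        (μ • Q + (1 - μ) • P) *ᵥ w = lamMax (μ • Q + (1 - μ) • P) • w ∧
        ∀ u : Fin n → ℝ, (μ • Q + (1 - μ) • P) *ᵥ u = lamMax (μ • Q + (1 - μ) • P) • u →
          ∃ c : ℝ, u = c • w := by
      intro μ hμ
      rw [hswap μ]
      exact hsimple' (1 - μ) ⟨by linarith [hμ.2], by linarith [hμ.1]⟩
    have hmax_sw : ∀ t ∈ Set.Icc (0:ℝ) 1,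
        t * lamMax Q + (1 - t) * lamMax P - lamMax (t • Q + (1 - t) • P) ≤
        (1 - μs) * lamMax Q + (1 - (1 - μs)) * lamMax P
          - lamMax ((1 - μs) • Q + (1 - (1 - μs)) • P) := by
      intro t ht
      rw [hswap t, hswap (1 - μs)]
      have h3 := hmax_raw (1 - t) ⟨by linarith [ht.2], by linarith [ht.1]⟩
      have he1 : (1:ℝ) - (1 - t) = t := by ring
      have he2 : (1:ℝ) - (1 - μs) = μs := by ring
      rw [he1, he2]
      rw [he1] at h3
      linarith [h3]
    have hve_sw : ((1 - μs) • Q + (1 - (1 - μs)) • P) *ᵥ v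
        = lamMax ((1 - μs) • Q + (1 - (1 - μs)) • P) • v := by
      rw [hswap (1 - μs), sub_sub_cancel]
      exact hve
    have := key hn Q P hQt hPt hQ0 hP0 hsimple_sw (1 - μs) (by linarith [hμs_mem.2])
      (by linarith) hmax_sw v hv hve_sw
    exact this
  -- value of qf (C μs) v
  have hqfv : qf (μs • P + (1 - μs) • Q) v = lamMax (μs • P + (1 - μs) • Q) := by
    unfold qf
    rw [hve, dotProduct_smul, smul_eq_mul, hv, mul_one]
  have hcomb : μs * qf P v + (1 - μs) * qf Q v = lamMax (μs • P + (1 - μs) • Q) := by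
    rw [← hqfv, qf_comb]
  set gval : ℝ := μs * s1 + (1 - μs) * s2 - lamMax (μs • P + (1 - μs) • Q) with hgval
  have hmax_eq : max (s1 - qf P v) (s2 - qf Q v) = gval := by
    have hxy : μs * (s1 - qf P v) + (1 - μs) * (s2 - qf Q v) = gval := by
      rw [hgval, ← hcomb]; ring
    rcases eq_or_lt_of_le hμs_mem.1 with h0 | h0
    · have hle := hkey1 (by linarith)
      rw [max_eq_right hle]
      rw [← h0] at hxy
      linarith [hxy]
    · rcases eq_or_lt_of_le hμs_mem.2 with h1 | h1
      · have hle := hkey2 h0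
        rw [max_eq_left hle]
        rw [h1] at hxy
        linarith [hxy]
      · have heq : s1 - qf P v = s2 - qf Q v := le_antisymm (hkey1 h1) (hkey2 h0)
        rw [heq, max_self]
        rw [← heq] at hxy
        nlinarith [hxy]
  -- lower bound for all feasible X
  have hflam_nonneg : 0 ≤ lamMax (μs • P + (1 - μs) • Q) := by
    rw [← hcomb]
    have := hP0 v
    have := hQ0 v
    have h1 := hμs_mem.1
    have h2 := hμs_mem.2
    nlinarith [hP0 v, hQ0 v]
  have hsdp_eq : ∀ X : Matrix (Fin n) (Fin n) ℝ,
      sdpObj A B X = max (s1 - (P * X).trace) (s2 - (Q * X).trace) := fun X => rfl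
  have hlower : ∀ X : Matrix (Fin n) (Fin n) ℝ, X.PosSemidef → X.trace ≤ 1 →
      gval ≤ sdpObj A B X := by
    intro X hXpsd hXtr
    have htrX : 0 ≤ X.trace := psd_trace_nonneg X hXpsd
    have htr : ((μs • P + (1 - μs) • Q) * X).trace
        = μs * (P * X).trace + (1 - μs) * (Q * X).trace := by
      rw [Matrix.add_mul, Matrix.smul_mul, Matrix.smul_mul, trace_add, trace_smul, trace_smul,
        smul_eq_mul, smul_eq_mul]
    have hbound := trace_mul_le hn (μs • P + (1 - μs) • Q) X hXpsd
    have hb2 : ((μs • P + (1 - μs) • Q) * X).trace ≤ lamMax (μs • P + (1 - μs) • Q) := by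
      calc ((μs • P + (1 - μs) • Q) * X).trace
          ≤ lamMax (μs • P + (1 - μs) • Q) * X.trace := hbound
      _ ≤ lamMax (μs • P + (1 - μs) • Q) * 1 := by
          exact mul_le_mul_of_nonneg_left hXtr hflam_nonneg
      _ = lamMax (μs • P + (1 - μs) • Q) := mul_one _
    have hcm : μs * (s1 - (P * X).trace) + (1 - μs) * (s2 - (Q * X).trace)
        ≤ sdpObj A B X := by
      rw [hsdp_eq X]
      rcases le_total (s1 - (P * X).trace) (s2 - (Q * X).trace) with hle | hle
      · rw [max_eq_right hle]
        nlinarith [hμs_mem.1, hμs_mem.2]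
      · rw [max_eq_left hle]
        nlinarith [hμs_mem.1, hμs_mem.2]
    have : gval ≤ μs * (s1 - (P * X).trace) + (1 - μs) * (s2 - (Q * X).trace) := by
      rw [hgval]
      have hexp : μs * (s1 - (P * X).trace) + (1 - μs) * (s2 - (Q * X).trace)
          = μs * s1 + (1 - μs) * s2 - ((μs • P + (1 - μs) • Q) * X).trace := by
        rw [htr]; ring
      rw [hexp]
      linarith [hb2]
    linarith [hcm]
  -- identities for rank-one matrices
  have hsdp_vv : ∀ u : Fin n → ℝ,
      sdpObj A B (vecMulVec u u) = max (s1 - qf P u) (s2 - qf Q u) := by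
    intro u
    rw [hsdp_eq, trace_mul_vecMulVec, trace_mul_vecMulVec]
  have hfair : ∀ u : Fin n → ℝ,
      max (fairLoss A u) (fairLoss B u) = max (s1 - qf P u) (s2 - qf Q u) := fun u => rfl
  -- assemble
  refine ⟨v, hv, ?_, ⟨⟨vecMulVec v v, posSemidef_vecMulVec v, ?_, rfl⟩, ?_⟩, ?_⟩
  · intro u hu
    have h2 := hlower (vecMulVec u u) (posSemidef_vecMulVec u)
      (by rw [Stmt12Aux.trace_vecMulVec, hu])
    rw [hsdp_vv u] at h2
    rw [hfair v, hfair u, hmax_eq]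
    exact h2
  · rw [Stmt12Aux.trace_vecMulVec, hv]
  · rintro r ⟨X, hX1, hX2, rfl⟩
    rw [hsdp_vv v, hmax_eq]
    exact hlower X hX1 hX2
  · rw [hsdp_vv v, hfair v]
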